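/- Let α, β be strictly increasing bijections of ℝ such that |α(t)| < |t| for every t ≠ 0, and β(t) = t for every t outside some compact subset of the interval (−1, 0]. Let t₀ ∈ (−1,1), let n ≥ 1, let γ₁, …, γₙ ∈ {α, α⁻¹, β, β⁻¹}, and set t_i := γ_i(t_{i−1}) for 1 ≤ i ≤ n. Suppose t_n ∈ (−1,1) but t_i ∉ (−1,1) for some index i. Then there exist m < n and δ₁, …, δ_m ∈ {α, α⁻¹, β, β⁻¹} such that the composition δ_m ∘ ⋯ ∘ δ₁ coincides with γₙ ∘ ⋯ ∘ γ₁ on some open neighborhood of t₀ (i.e., the two compositions have the same germ at t₀, and moreover all the intermediate points of the shorter composition starting from t₀ can be taken in (−1,1)). In particular, any decomposition of minimal length of a germ of an element of ⟨α,β⟩ at a point of (−1,1), with image in (−1,1), has all its intermediate points in (−1,1). -/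

import Mathlib

open Set

private def comp5 (f : ℕ → Equiv.Perm ℝ) : ℕ → ℝ → ℝ
  | 0 => id
  | n+1 => fun x => f n (comp5 f n x)

private lemma comp5_congr (f g : ℕ → Equiv.Perm ℝ) (n : ℕ) (h : ∀ i < n, f i = g i) :
    comp5 f n = comp5 g n := by
  induction n with
  | zero => rfl
  | succ n ih =>
    funext x
    simp only [comp5, ih (fun i hi => h i (by omega)), h n (by omega)]

private lemma comp5_add (f : ℕ → Equiv.Perm ℝ) (a b : ℕ) (x : ℝ) :
    comp5 f (a + b) x = comp5 (fun j => f (a + j)) b (comp5 f a x) := by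
  induction b with
  | zero => rfl
  | succ b ih =>
    show f (a+b) (comp5 f (a+b) x) = f (a+b) (comp5 (fun j => f (a+j)) b (comp5 f a x))
    rw [ih]

private lemma comp5_prod (f : ℕ → Equiv.Perm ℝ) (n : ℕ) :
    ⇑(((List.range n).map f).reverse.prod) = comp5 f n := by
  induction n with
  | zero => simp [comp5]
  | succ n ih =>
    funext x
    simp only [List.range_succ, List.map_append, List.reverse_append, List.map_cons,
      List.map_nil, List.reverse_cons, List.reverse_nil, List.nil_append, List.cons_append,
      List.prod_cons, Equiv.Perm.mul_apply, comp5]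
    rw [ih]

private lemma comp5_cont (f : ℕ → Equiv.Perm ℝ) (n : ℕ) (h : ∀ i < n, Continuous ⇑(f i)) :
    Continuous (comp5 f n) := by
  induction n with
  | zero => exact continuous_id
  | succ n ih => exact (h n (by omega)).comp (ih (fun i hi => h i (by omega)))

private lemma reduce_one (γ : ℕ → Equiv.Perm ℝ) (n k : ℕ) (hk : k < n) (x : ℝ)
    (hfix : γ k (comp5 γ k x) = comp5 γ k x) :
    comp5 (fun j => if j < k then γ j else γ (j+1)) (n-1) x = comp5 γ n x := by
  set δ : ℕ → Equiv.Perm ℝ := fun j => if j < k then γ j else γ (j+1) with hδ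
  set m := n - k - 1 with hm
  have hR : comp5 γ n x = comp5 (fun j => γ (k + 1 + j)) m (comp5 γ k x) := by
    have e : n = (k+1) + m := by omega
    rw [e, comp5_add]
    show comp5 _ m (γ k (comp5 γ k x)) = _
    rw [hfix]
  have hL : comp5 δ (n-1) x = comp5 (fun j => δ (k + j)) m (comp5 δ k x) := by
    have e : n - 1 = k + m := by omega
    rw [e, comp5_add]
  have h1 : comp5 δ k x = comp5 γ k x := by
    rw [comp5_congr δ γ k (fun i hi => by simp [hδ, hi])]
  have h2 : (fun j => δ (k + j)) = fun j => γ (k + 1 + j) := by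
    funext j
    have hn : ¬ (k + j < k) := by omega
    simp only [hδ]
    rw [if_neg hn]
    congr 1
    omega
  rw [hL, h1, h2, ← hR]

private lemma reduce_two (γ : ℕ → Equiv.Perm ℝ) (n k : ℕ) (hk1 : 1 ≤ k) (hk : k < n) (x : ℝ)
    (hcanc : ∀ z : ℝ, γ k (γ (k-1) z) = z) :
    comp5 (fun j => if j < k-1 then γ j else γ (j+2)) (n-2) x = comp5 γ n x := by
  set δ : ℕ → Equiv.Perm ℝ := fun j => if j < k-1 then γ j else γ (j+2) with hδ
  set m := n - k - 1 with hm
  have hR : comp5 γ n x = comp5 (fun j => γ (k + 1 + j)) m (comp5 γ (k-1) x) := by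
    have e : n = (k+1) + m := by omega
    rw [e, comp5_add]
    have e2 : comp5 γ (k+1) x = comp5 γ (k-1) x := by
      show γ k (comp5 γ k x) = _
      have e3 : k = (k-1) + 1 := by omega
      rw [e3]
      show γ ((k-1)+1) (γ (k-1) (comp5 γ (k-1) x)) = _
      rw [← e3, hcanc]
    rw [e2]
  have hL : comp5 δ (n-2) x = comp5 (fun j => δ (k - 1 + j)) m (comp5 δ (k-1) x) := by
    have e : n - 2 = (k-1) + m := by omega
    rw [e, comp5_add]
  have h1 : comp5 δ (k-1) x = comp5 γ (k-1) x := by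
    rw [comp5_congr δ γ (k-1) (fun i hi => by simp [hδ, hi])]
  have h2 : (fun j => δ (k - 1 + j)) = fun j => γ (k + 1 + j) := by
    funext j
    have hn : ¬ (k - 1 + j < k - 1) := by omega
    simp only [hδ]
    rw [if_neg hn]
    congr 1
    omega
  rw [hL, h1, h2, ← hR]

private lemma perm_apply_inv_self' (e : Equiv.Perm ℝ) (x : ℝ) : e (e⁻¹ x) = x :=
  e.apply_symm_apply x

private lemma perm_inv_mono (σ : Equiv.Perm ℝ) (h : StrictMono ⇑σ) : StrictMono ⇑σ⁻¹ := by
  intro a b hab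
  have := h.lt_iff_lt (a := σ⁻¹ a) (b := σ⁻¹ b)
  simp only [perm_apply_inv_self'] at this
  exact this.mp hab

private lemma perm_cont (σ : Equiv.Perm ℝ) (h : StrictMono ⇑σ) : Continuous ⇑σ :=
  (StrictMono.orderIsoOfSurjective _ h σ.surjective).continuous

section facts
variable (α : Equiv.Perm ℝ) (hα : StrictMono ⇑α) (hcontr : ∀ s : ℝ, s ≠ 0 → |α s| < |s|)

include hα hcontr

private lemma alpha_zero : α 0 = 0 := by
  rcases lt_trichotomy (α 0) 0 with hc | hc | hc
  · have h1 := hcontr (α 0 / 2) (by linarith)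
    have h2 : α (α 0 / 2) < α 0 := hα (by linarith)
    rw [abs_of_neg (by linarith), abs_of_neg (by linarith)] at h1
    linarith
  · exact hc
  · have h1 := hcontr (α 0 / 2) (by positivity)
    have h2 : α 0 < α (α 0 / 2) := hα (by linarith)
    rw [abs_of_pos (by linarith), abs_of_pos (by linarith)] at h1
    linarith

private lemma alpha_Ioo : ∀ s ∈ Ioo (-1 : ℝ) 1, α s ∈ Ioo (-1 : ℝ) 1 := by
  intro s hs
  rcases eq_or_ne s 0 with rfl | h0
  · rw [alpha_zero α hα hcontr]; exact ⟨by norm_num, by norm_num⟩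
  · have h1 := hcontr s h0
    have h2 : |s| < 1 := abs_lt.mpr ⟨hs.1, hs.2⟩
    exact mem_Ioo.mpr (abs_lt.mp (h1.trans h2))

private lemma alpha_inv_out : ∀ s : ℝ, s ∉ Ioo (-1 : ℝ) 1 → α⁻¹ s ∉ Ioo (-1 : ℝ) 1 := by
  intro s hs h
  exact hs (by simpa [perm_apply_inv_self'] using alpha_Ioo α hα hcontr _ h)

end facts

section bfacts
variable (β : Equiv.Perm ℝ) (K : Set ℝ) (hfix : ∀ s ∉ K, β s = s)

include hfix

private lemma beta_mapsK : ∀ s ∈ K, β s ∈ K := by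
  intro s hs
  by_contra h
  have e : β s = s := β.injective (hfix _ h)
  exact h (by rw [e]; exact hs)

private lemma betainv_fix : ∀ s ∉ K, β⁻¹ s = s := by
  intro s hs
  conv_lhs => rw [← hfix s hs]
  exact β.symm_apply_apply s

private lemma betainv_mapsK : ∀ s ∈ K, β⁻¹ s ∈ K := by
  intro s hs
  by_contra h
  have e := hfix _ h
  rw [perm_apply_inv_self'] at e
  exact h (e ▸ hs)

end bfacts

private lemma key (α β : Equiv.Perm ℝ) (hα : StrictMono ⇑α) (hβ : StrictMono ⇑β)
    (hcontr : ∀ s : ℝ, s ≠ 0 → |α s| < |s|)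
    (K : Set ℝ) (hK : IsCompact K) (hKsub : K ⊆ Set.Ioc (-1) 0) (hfix : ∀ s ∉ K, β s = s)
    (t₀ : ℝ) (ht₀ : t₀ ∈ Set.Ioo (-1 : ℝ) 1) :
    ∀ n : ℕ, ∀ γ : ℕ → Equiv.Perm ℝ,
      (∀ i < n, γ i ∈ ({α, α⁻¹, β, β⁻¹} : Set (Equiv.Perm ℝ))) →
      comp5 γ n t₀ ∈ Set.Ioo (-1 : ℝ) 1 →
      (∃ i ≤ n, comp5 γ i t₀ ∉ Set.Ioo (-1 : ℝ) 1) →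
      ∃ m < n, ∃ δ : ℕ → Equiv.Perm ℝ,
        (∀ j < m, δ j ∈ ({α, α⁻¹, β, β⁻¹} : Set (Equiv.Perm ℝ))) ∧
        (∀ j ≤ m, comp5 δ j t₀ ∈ Set.Ioo (-1 : ℝ) 1) ∧
        ∃ U ∈ nhds t₀, Set.EqOn (comp5 δ m) (comp5 γ n) U := by
  intro n
  induction n using Nat.strong_induction_on with
  | _ n IH =>
  intro γ hγ htn hout
  classical
  have hKIoo : K ⊆ Ioo (-1:ℝ) 1 := fun s hs =>
    ⟨(hKsub hs).1, lt_of_le_of_lt (hKsub hs).2 one_pos⟩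
  have houtK : ∀ s : ℝ, s ∉ Ioo (-1:ℝ) 1 → s ∉ K := fun s hs h => hs (hKIoo h)
  have hβIoo : ∀ s ∈ Ioo (-1:ℝ) 1, β s ∈ Ioo (-1:ℝ) 1 := by
    intro s hs
    by_cases h : s ∈ K
    · exact hKIoo (beta_mapsK β K hfix s h)
    · rw [hfix s h]; exact hs
  have hβinvIoo : ∀ s ∈ Ioo (-1:ℝ) 1, β⁻¹ s ∈ Ioo (-1:ℝ) 1 := by
    intro s hs
    by_cases h : s ∈ K
    · exact hKIoo (betainv_mapsK β K hfix s h)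
    · rw [betainv_fix β K hfix s h]; exact hs
  have hαIoo := alpha_Ioo α hα hcontr
  have hαinv := alpha_inv_out α hα hcontr
  have hletter : ∀ l < n, γ l = α ∨ γ l = α⁻¹ ∨ γ l = β ∨ γ l = β⁻¹ := by
    intro l hl
    simpa [Set.mem_insert_iff] using hγ l hl
  have hcontAll : ∀ l < n, Continuous ⇑(γ l) := by
    intro l hl
    rcases hletter l hl with h|h|h|h <;> rw [h]
    exacts [perm_cont α hα, perm_cont _ (perm_inv_mono α hα),
      perm_cont β hβ, perm_cont _ (perm_inv_mono β hβ)]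
  -- first exit index i
  have hex : ∃ i, comp5 γ i t₀ ∉ Ioo (-1:ℝ) 1 := by
    obtain ⟨i, _, h⟩ := hout; exact ⟨i, h⟩
  set i := Nat.find hex with hidef
  have hti : comp5 γ i t₀ ∉ Ioo (-1:ℝ) 1 := Nat.find_spec hex
  have htl : ∀ l < i, comp5 γ l t₀ ∈ Ioo (-1:ℝ) 1 :=
    fun l hl => not_not.mp (Nat.find_min hex hl)
  have hi0 : 1 ≤ i := by
    rcases Nat.eq_zero_or_pos i with h | h
    · exfalso; apply hti; rw [h]; exact ht₀
    · exact h
  have hin : i < n := by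
    obtain ⟨i₀, hi₀n, hi₀⟩ := hout
    have h1 : i ≤ i₀ := Nat.find_min' hex hi₀
    rcases Nat.lt_or_ge i n with h | h
    · exact h
    · exfalso; apply hti
      have : i = n := by omega
      rw [this]; exact htn
  -- first return index j
  have hexj : ∃ j, i < j ∧ comp5 γ j t₀ ∈ Ioo (-1:ℝ) 1 := ⟨n, hin, htn⟩
  set j := Nat.find hexj with hjdef
  have hjspec := Nat.find_spec hexj
  have hij : i < j := hjspec.1
  have htj : comp5 γ j t₀ ∈ Ioo (-1:ℝ) 1 := hjspec.2
  have hjn : j ≤ n := Nat.find_min' hexj ⟨hin, htn⟩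
  have hmid : ∀ l, i ≤ l → l < j → comp5 γ l t₀ ∉ Ioo (-1:ℝ) 1 := by
    intro l hl1 hl2
    rcases eq_or_lt_of_le hl1 with h | h
    · rw [← h]; exact hti
    · intro hmem
      exact Nat.find_min hexj hl2 ⟨h, hmem⟩
  -- γ (i-1) = α⁻¹
  have hprev : γ (i-1) = α⁻¹ := by
    have hl : i - 1 < n := by omega
    have htprev : comp5 γ (i-1) t₀ ∈ Ioo (-1:ℝ) 1 := htl (i-1) (by omega)
    have heq : comp5 γ i t₀ = γ (i-1) (comp5 γ (i-1) t₀) := by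
      conv_lhs => rw [show i = (i-1)+1 by omega]
      rfl
    rcases hletter (i-1) hl with h|h|h|h
    · exfalso; apply hti; rw [heq, h]; exact hαIoo _ htprev
    · exact h
    · exfalso; apply hti; rw [heq, h]; exact hβIoo _ htprev
    · exfalso; apply hti; rw [heq, h]; exact hβinvIoo _ htprev
  -- reduction: a strictly shorter word with the same germ
  obtain ⟨m', hm', δ, hδS, U, hU, hEq⟩ :
      ∃ m' < n, ∃ δ : ℕ → Equiv.Perm ℝ,
        (∀ j' < m', δ j' ∈ ({α, α⁻¹, β, β⁻¹} : Set (Equiv.Perm ℝ))) ∧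
        ∃ U ∈ nhds t₀, Set.EqOn (comp5 δ m') (comp5 γ n) U := by
    by_cases hB : ∃ k, i ≤ k ∧ k < j ∧ (γ k = β ∨ γ k = β⁻¹)
    · -- delete one β-letter
      obtain ⟨k, hik, hkj, hbk⟩ := hB
      have hkn : k < n := lt_of_lt_of_le hkj hjn
      have htkK : comp5 γ k t₀ ∉ K := houtK _ (hmid k hik hkj)
      have hcont : Continuous (comp5 γ k) := comp5_cont γ k (fun l hl => hcontAll l (by omega))
      refine ⟨n-1, by omega, fun j' => if j' < k then γ j' else γ (j'+1), ?_,
        comp5 γ k ⁻¹' Kᶜ, ?_, ?_⟩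
      · intro j' hj'
        by_cases h : j' < k
        · simpa [h] using hγ j' (by omega)
        · simpa [h] using hγ (j'+1) (by omega)
      · exact (hK.isClosed.isOpen_compl.preimage hcont).mem_nhds htkK
      · intro x hx
        apply reduce_one γ n k hkn x
        rcases hbk with h | h
        · rw [h]; exact hfix _ hx
        · rw [h]; exact betainv_fix β K hfix _ hx
    · -- cancel an adjacent α⁻¹, α pair
      push_neg at hB
      have hαonly : ∀ l, i ≤ l → l < j → γ l = α ∨ γ l = α⁻¹ := by
        intro l h1 h2
        rcases hletter l (lt_of_lt_of_le h2 hjn) with h|h|h|h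
        · exact Or.inl h
        · exact Or.inr h
        · exact absurd h (hB l h1 h2).1
        · exact absurd h (hB l h1 h2).2
      have hj1 : γ (j-1) = α := by
        have h1 : i ≤ j - 1 := by omega
        have h2 : j - 1 < j := by omega
        have htj1 := hmid (j-1) h1 h2
        have heq : comp5 γ j t₀ = γ (j-1) (comp5 γ (j-1) t₀) := by
          conv_lhs => rw [show j = (j-1)+1 by omega]
          rfl
        rcases hαonly (j-1) h1 h2 with h | h
        · exact h
        · exact absurd (heq ▸ htj) (by rw [h] at heq; exact fun hh => hαinv _ htj1 (heq ▸ htj))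
      have hexk : ∃ k, i ≤ k ∧ γ k = α := ⟨j-1, by omega, hj1⟩
      set k := Nat.find hexk with hkdef
      have hkspec := Nat.find_spec hexk
      have hik : i ≤ k := hkspec.1
      have hkα : γ k = α := hkspec.2
      have hkj1 : k ≤ j - 1 := Nat.find_min' hexk ⟨by omega, hj1⟩
      have hkn : k < n := by omega
      have hk1 : 1 ≤ k := by omega
      have hprevk : γ (k-1) = α⁻¹ := by
        rcases Nat.eq_or_lt_of_le hik with h | h
        · have e : k - 1 = i - 1 := by omega
          rw [e]; exact hprev
        · have h1 : i ≤ k - 1 := by omega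
          have h2 : k - 1 < j := by omega
          rcases hαonly (k-1) h1 h2 with hh | hh
          · exact absurd ⟨h1, hh⟩ (Nat.find_min hexk (show k-1 < k by omega))
          · exact hh
      have hcanc : ∀ z : ℝ, γ k (γ (k-1) z) = z := by
        intro z
        rw [hkα, hprevk]
        exact α.apply_symm_apply z
      refine ⟨n-2, by omega, fun j' => if j' < k-1 then γ j' else γ (j'+2), ?_,
        Set.univ, Filter.univ_mem, ?_⟩
      · intro j' hj'
        by_cases h : j' < k-1
        · simpa [h] using hγ j' (by omega)
        · simpa [h] using hγ (j'+2) (by omega)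
      · intro x _
        exact reduce_two γ n k hk1 hkn x hcanc
  -- conclude: either done, or recurse on the shorter word
  have ht₀U : t₀ ∈ U := mem_of_mem_nhds hU
  have hδn : comp5 δ m' t₀ ∈ Ioo (-1:ℝ) 1 := by
    rw [hEq ht₀U]; exact htn
  by_cases hall : ∀ j' ≤ m', comp5 δ j' t₀ ∈ Ioo (-1:ℝ) 1
  · exact ⟨m', hm', δ, hδS, hall, U, hU, hEq⟩
  · push_neg at hall
    obtain ⟨j', hj'm, hj'⟩ := hall
    obtain ⟨m, hmm', δ', hS', hall', V, hV, hEq'⟩ :=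
      IH m' hm' δ hδS hδn ⟨j', hj'm, hj'⟩
    exact ⟨m, hmm'.trans hm', δ', hS', hall', U ∩ V, Filter.inter_mem hU hV,
      fun x hx => (hEq' hx.2).trans (hEq hx.1)⟩

/-- minimal-length decompositions of germs at points of (−1,1) have all
intermediate points in (−1,1): if α is an increasing contraction of ℝ fixing 0, β an
increasing bijection supported in a compact subset of (−1,0], and a composition of n
letters from {α, α⁻¹, β, β⁻¹} sends t₀ ∈ (−1,1) to a point of (−1,1) with some
intermediate point outside (−1,1), then there is a strictly shorter word with the same
germ at t₀ whose intermediate points starting from t₀ all lie in (−1,1). -/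
theorem stmt5 (α β : Equiv.Perm ℝ) (hα : StrictMono ⇑α) (hβ : StrictMono ⇑β)
    (hcontr : ∀ t : ℝ, t ≠ 0 → |α t| < |t|)
    (hsupp : ∃ K : Set ℝ, IsCompact K ∧ K ⊆ Set.Ioc (-1) 0 ∧ ∀ t ∉ K, β t = t)
    (t₀ : ℝ) (ht₀ : t₀ ∈ Set.Ioo (-1 : ℝ) 1)
    (n : ℕ) (hn : 1 ≤ n)
    (γ : ℕ → Equiv.Perm ℝ)
    (hγ : ∀ i < n, γ i ∈ ({α, α⁻¹, β, β⁻¹} : Set (Equiv.Perm ℝ)))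
    (t : ℕ → ℝ) (ht0 : t 0 = t₀) (hstep : ∀ i < n, t (i + 1) = γ i (t i))
    (htn : t n ∈ Set.Ioo (-1 : ℝ) 1)
    (hout : ∃ i ≤ n, t i ∉ Set.Ioo (-1 : ℝ) 1) :
    ∃ m : ℕ, m < n ∧
      ∃ (δ : ℕ → Equiv.Perm ℝ) (s : ℕ → ℝ),
        (∀ j < m, δ j ∈ ({α, α⁻¹, β, β⁻¹} : Set (Equiv.Perm ℝ))) ∧
        s 0 = t₀ ∧ (∀ j < m, s (j + 1) = δ j (s j)) ∧
        (∀ j ≤ m, s j ∈ Set.Ioo (-1 : ℝ) 1) ∧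
        ∃ U ∈ nhds t₀, Set.EqOn
          (⇑(((List.range m).map δ).reverse.prod))
          (⇑(((List.range n).map γ).reverse.prod)) U := by
  obtain ⟨K, hK, hKsub, hfix⟩ := hsupp
  have htt : ∀ i, i ≤ n → t i = comp5 γ i t₀ := by
    intro i
    induction i with
    | zero => intro _; exact ht0
    | succ i ih =>
      intro hi
      rw [hstep i (by omega), ih (by omega)]
      rfl
  obtain ⟨m, hm, δ, hS, hall, U, hU, hEq⟩ :=
    key α β hα hβ hcontr K hK hKsub hfix t₀ ht₀ n γ hγ
      (by rw [← htt n le_rfl]; exact htn)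
      (by obtain ⟨i, hi, h⟩ := hout; exact ⟨i, hi, by rw [← htt i hi]; exact h⟩)
  refine ⟨m, hm, δ, fun j => comp5 δ j t₀, hS, rfl, fun j hj => rfl, hall, U, hU, ?_⟩
  rw [comp5_prod, comp5_prod]
  exact hEq
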